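/- Let ℓ ∈ ℕ and m ∈ {0,…,ℓ}, let A ⊆ ℝ^ℓ be countably m-rectifiable and let B ⊆ ℝ^ℓ be (ℓ−m)-negligible. Then the set of displacement vectors {y − x : x ∈ A, y ∈ B} ⊆ ℝ^ℓ has ℓ-dimensional Lebesgue (outer) measure zero. -/

import Mathlib

open Set MeasureTheory Filter
open scoped ENNReal NNReal Topology

private def pieceSet {m l : ℕ} (S : Set (Fin m → ℝ)) (f : S → (Fin l → ℝ))
    (U : Set (Fin l → ℝ)) (aj : ℝ) (k : Fin m → ℤ) : Set (Fin l → ℝ) :=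
  {z | ∃ x : S, (∀ i, (k i : ℝ) * aj ≤ (x : Fin m → ℝ) i
      ∧ (x : Fin m → ℝ) i ≤ ((k i : ℝ) + 1) * aj)
    ∧ ∃ y ∈ U, z = y - f x}

private lemma pieceSet_diam {m l : ℕ} {K : ℝ≥0} {S : Set (Fin m → ℝ)}
    {f : S → (Fin l → ℝ)} (hf : LipschitzWith K f) {U : Set (Fin l → ℝ)} {aj : ℝ}
    (haj : 0 < aj) (hU : EMetric.diam U ≤ ENNReal.ofReal aj) (k : Fin m → ℤ) :
    EMetric.diam (pieceSet S f U aj k) ≤ ENNReal.ofReal (((K : ℝ) + 1) * aj) := by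
  apply EMetric.diam_le
  rintro z ⟨x, hx, y, hy, rfl⟩ z' ⟨x', hx', y', hy', rfl⟩
  rw [edist_dist]
  apply ENNReal.ofReal_le_ofReal
  have h1 : dist y y' ≤ aj := by
    have h := (EMetric.edist_le_diam_of_mem hy hy').trans hU
    rw [edist_dist] at h
    rwa [ENNReal.ofReal_le_ofReal_iff haj.le] at h
  have h2 : dist (x : Fin m → ℝ) (x' : Fin m → ℝ) ≤ aj := by
    rw [dist_pi_le_iff haj.le]
    intro i
    rw [Real.dist_eq, abs_sub_le_iff]
    constructor
    · linarith [(hx i).2, (hx' i).1]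
    · linarith [(hx i).1, (hx' i).2]
  have h3 : dist (f x) (f x') ≤ (K : ℝ) * aj := by
    refine (hf.dist_le_mul x x').trans ?_
    rw [Subtype.dist_eq]
    exact mul_le_mul_of_nonneg_left h2 K.2
  calc dist (y - f x) (y' - f x') ≤ dist y y' + dist (f x) (f x') := dist_sub_sub_le _ _ _ _
    _ ≤ aj + (K : ℝ) * aj := add_le_add h1 h3
    _ = ((K : ℝ) + 1) * aj := by ring

private lemma pieceSet_cover {m l : ℕ} {S : Set (Fin m → ℝ)} {f : S → (Fin l → ℝ)}
    {U : Set (Fin l → ℝ)} {aj : ℝ} (haj : 0 < aj) {z : Fin l → ℝ} {x : S} {y : Fin l → ℝ}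
    (hy : y ∈ U) (hz : z = y - f x) : ∃ k : Fin m → ℤ, z ∈ pieceSet S f U aj k := by
  refine ⟨fun i => ⌊(x : Fin m → ℝ) i / aj⌋, x, ?_, y, hy, hz⟩
  intro i
  constructor
  · calc (⌊(x : Fin m → ℝ) i / aj⌋ : ℝ) * aj ≤ ((x : Fin m → ℝ) i / aj) * aj :=
        mul_le_mul_of_nonneg_right (Int.floor_le _) haj.le
      _ = (x : Fin m → ℝ) i := div_mul_cancel₀ _ haj.ne'
  · have h := Int.lt_floor_add_one ((x : Fin m → ℝ) i / aj)
    calc (x : Fin m → ℝ) i = ((x : Fin m → ℝ) i / aj) * aj := (div_mul_cancel₀ _ haj.ne').symm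
      _ ≤ ((⌊(x : Fin m → ℝ) i / aj⌋ : ℝ) + 1) * aj := mul_le_mul_of_nonneg_right h.le haj.le

private lemma pieceSet_sum {m l : ℕ} (hml : m < l) (K : ℝ≥0) {R aj : ℝ} (hR : 0 ≤ R)
    (haj : 0 < aj) (haj1 : aj ≤ 1) {S : Set (Fin m → ℝ)} (hSb : ∀ x ∈ S, ∀ i, |x i| ≤ R)
    {f : S → (Fin l → ℝ)} (hf : LipschitzWith K f) {U : Set (Fin l → ℝ)}
    (hU : EMetric.diam U ≤ ENNReal.ofReal aj) :
    (∑' k : Fin m → ℤ, EMetric.diam (pieceSet S f U aj k) ^ (l : ℝ))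
      ≤ ENNReal.ofReal ((K : ℝ) + 1) ^ (l : ℝ) * ENNReal.ofReal ((2 * R + 2) ^ m)
        * ENNReal.ofReal aj ^ ((l - m : ℕ) : ℝ) := by
  have hlpos : (0 : ℝ) < (l : ℝ) := by exact_mod_cast (show 0 < l by omega)
  have hlt : (l : ℝ) = (m : ℝ) + ((l - m : ℕ) : ℝ) := by
    rw [Nat.cast_sub hml.le]; ring
  set N : ℤ := ⌊R / aj⌋ with hN
  have hN0 : 0 ≤ N := Int.floor_nonneg.mpr (by positivity)
  set Fs : Finset (Fin m → ℤ) := Fintype.piFinset (fun _ => Finset.Icc (-(N + 1)) N) with hFs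
  have hsupp : ∀ k ∉ Fs, EMetric.diam (pieceSet S f U aj k) ^ (l : ℝ) = 0 := by
    intro k hk
    have hemp : pieceSet S f U aj k = ∅ := by
      rw [eq_empty_iff_forall_notMem]
      rintro z ⟨x, hx, y, hy, rfl⟩
      apply hk
      rw [hFs, Fintype.mem_piFinset]
      intro i
      rw [Finset.mem_Icc]
      have hb := abs_le.mp (hSb x x.2 i)
      have h1 := (hx i).1
      have h2 := (hx i).2
      constructor
      · have hdiv : -(R / aj) ≤ (k i : ℝ) + 1 := by
          rw [← neg_div, div_le_iff₀ haj]
          nlinarith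
        have hceil : ⌈-(R / aj)⌉ ≤ k i + 1 := Int.ceil_le.mpr (by push_cast; linarith)
        rw [Int.ceil_neg] at hceil
        omega
      · have hdiv : (k i : ℝ) ≤ R / aj := by
          rw [le_div_iff₀ haj]
          nlinarith
        exact Int.le_floor.mpr hdiv
    rw [hemp]
    simp [EMetric.diam, EMetric.diam_empty, ENNReal.zero_rpow_of_pos hlpos]
  rw [tsum_eq_sum hsupp]
  have hterm : ∀ k ∈ Fs, EMetric.diam (pieceSet S f U aj k) ^ (l : ℝ)
      ≤ ENNReal.ofReal (((K : ℝ) + 1) * aj) ^ (l : ℝ) := fun k _ =>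
    ENNReal.rpow_le_rpow (pieceSet_diam hf haj hU k) hlpos.le
  refine le_trans (Finset.sum_le_card_nsmul _ _ _ hterm) ?_
  rw [nsmul_eq_mul]
  have hcard_real : ((Fs.card : ℝ)) * aj ^ m ≤ (2 * R + 2) ^ m := by
    have hcardeq : (Fs.card : ℝ) = ((2 * N + 2 : ℤ) : ℝ) ^ m := by
      rw [hFs, Fintype.card_piFinset]
      simp only [Int.card_Icc]
      rw [Finset.prod_const, Finset.card_univ, Fintype.card_fin,
        show N + 1 - (-(N + 1)) = 2 * N + 2 by ring, Nat.cast_pow]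
      congr 1
      rw [← Int.cast_natCast, Int.toNat_of_nonneg (show (0:ℤ) ≤ 2 * N + 2 by omega)]
    rw [hcardeq, ← mul_pow]
    have hNle : ((2 * N + 2 : ℤ) : ℝ) * aj ≤ 2 * R + 2 := by
      have hfl : (N : ℝ) ≤ R / aj := Int.floor_le _
      have h1 : ((2 * N + 2 : ℤ) : ℝ) ≤ 2 * (R / aj) + 2 := by push_cast; linarith
      calc ((2 * N + 2 : ℤ) : ℝ) * aj ≤ (2 * (R / aj) + 2) * aj :=
            mul_le_mul_of_nonneg_right h1 haj.le
        _ = 2 * R + 2 * aj := by field_simp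
        _ ≤ 2 * R + 2 := by linarith
    apply pow_le_pow_left₀ ?_ hNle
    positivity
  have hcard_enn : (Fs.card : ℝ≥0∞) * ENNReal.ofReal aj ^ (m : ℝ)
      ≤ ENNReal.ofReal ((2 * R + 2) ^ m) := by
    rw [ENNReal.rpow_natCast, ← ENNReal.ofReal_pow haj.le,
      ← ENNReal.ofReal_natCast, ← ENNReal.ofReal_mul (by positivity)]
    exact ENNReal.ofReal_le_ofReal hcard_real
  calc (Fs.card : ℝ≥0∞) * ENNReal.ofReal (((K : ℝ) + 1) * aj) ^ (l : ℝ)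
      = (Fs.card : ℝ≥0∞)
          * (ENNReal.ofReal ((K : ℝ) + 1) ^ (l : ℝ) * ENNReal.ofReal aj ^ (l : ℝ)) := by
        rw [ENNReal.ofReal_mul (by positivity), ENNReal.mul_rpow_of_nonneg _ _ hlpos.le]
    _ = ENNReal.ofReal ((K : ℝ) + 1) ^ (l : ℝ)
          * ((Fs.card : ℝ≥0∞) * ENNReal.ofReal aj ^ (m : ℝ))
          * ENNReal.ofReal aj ^ ((l - m : ℕ) : ℝ) := by
        rw [hlt, ENNReal.rpow_add _ _ (ENNReal.ofReal_pos.mpr haj).ne' ENNReal.ofReal_ne_top]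
        ring
    _ ≤ ENNReal.ofReal ((K : ℝ) + 1) ^ (l : ℝ) * ENNReal.ofReal ((2 * R + 2) ^ m)
          * ENNReal.ofReal aj ^ ((l - m : ℕ) : ℝ) :=
        mul_le_mul_left (mul_le_mul_right hcard_enn _) _

private lemma exists_small_cover {X : Type*} [EMetricSpace X] [MeasurableSpace X] [BorelSpace X]
    {s : Set X} {d : ℝ} (hd : 0 < d) (h : μH[d] s = 0) {ρ ε : ℝ≥0∞} (hρ : 0 < ρ) (hε : 0 < ε) :
    ∃ u : ℕ → Set X, s ⊆ (⋃ j, u j) ∧ (∀ j, EMetric.diam (u j) ≤ ρ) ∧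
      ∑' j, EMetric.diam (u j) ^ d ≤ ε := by
  rw [MeasureTheory.Measure.hausdorffMeasure_apply] at h
  have h2 : (⨅ (t : ℕ → Set X) (_ : s ⊆ ⋃ n, t n) (_ : ∀ n, EMetric.diam (t n) ≤ ρ),
      ∑' n, ⨆ _ : (t n).Nonempty, EMetric.diam (t n) ^ d) = 0 := by
    refine le_antisymm ?_ (zero_le)
    refine le_trans ?_ h.le
    exact le_iSup₂ (f := fun (r : ℝ≥0∞) (_ : 0 < r) =>
      ⨅ (t : ℕ → Set X) (_ : s ⊆ ⋃ n, t n) (_ : ∀ n, EMetric.diam (t n) ≤ r),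
        ∑' n, ⨆ _ : (t n).Nonempty, EMetric.diam (t n) ^ d) ρ hρ
  have h3 : (⨅ (t : ℕ → Set X) (_ : s ⊆ ⋃ n, t n) (_ : ∀ n, EMetric.diam (t n) ≤ ρ),
      ∑' n, ⨆ _ : (t n).Nonempty, EMetric.diam (t n) ^ d) < ε := h2 ▸ hε
  simp only [iInf_lt_iff] at h3
  obtain ⟨u, hcov, hdiam, hsum⟩ := h3
  refine ⟨u, hcov, hdiam, ?_⟩
  have heq : ∑' j, EMetric.diam (u j) ^ d
      = ∑' j, ⨆ _ : (u j).Nonempty, EMetric.diam (u j) ^ d := by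
    refine tsum_congr fun j => ?_
    by_cases hne : (u j).Nonempty
    · simp [hne]
    · have he : u j = ∅ := not_nonempty_iff_eq_empty.mp hne
      simp [he, EMetric.diam, EMetric.diam_empty, ENNReal.zero_rpow_of_pos hd, hne]
  rw [heq]
  exact hsum.le

private lemma core_null {m l : ℕ} (hml : m < l) (K : ℝ≥0) {R : ℝ} (hR : 0 ≤ R)
    (S : Set (Fin m → ℝ)) (hSb : ∀ x ∈ S, ∀ i, |x i| ≤ R)
    (f : S → (Fin l → ℝ)) (hf : LipschitzWith K f)
    (B : Set (Fin l → ℝ)) (hB : μH[((l - m : ℕ) : ℝ)] B = 0) :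
    μH[(l : ℝ)] {z | ∃ x : S, ∃ y ∈ B, z = y - f x} = 0 := by
  have ht1 : 1 ≤ ((l - m : ℕ) : ℝ) := by exact_mod_cast (show (1:ℕ) ≤ l - m by omega)
  have htpos : 0 < ((l - m : ℕ) : ℝ) := lt_of_lt_of_le one_pos ht1
  set D : ℝ≥0∞ := ENNReal.ofReal ((K : ℝ) + 1) ^ (l : ℝ)
    * ENNReal.ofReal ((2 * R + 2) ^ m) with hDdef
  have hDne : D ≠ ⊤ :=
    ENNReal.mul_ne_top (ENNReal.rpow_ne_top_of_nonneg (Nat.cast_nonneg l)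
      ENNReal.ofReal_ne_top) ENNReal.ofReal_ne_top
  suffices H : ∀ ε : ℝ, 0 < ε → ε ≤ 1 →
      μH[(l : ℝ)] {z | ∃ x : S, ∃ y ∈ B, z = y - f x} ≤ D * 3 * ENNReal.ofReal ε by
    refine le_antisymm ?_ (zero_le)
    have htend : Tendsto (fun n : ℕ => D * 3 * ENNReal.ofReal (1 / (n + 1 : ℝ)))
        atTop (𝓝 0) := by
      have h1 : Tendsto (fun n : ℕ => ENNReal.ofReal (1 / (n + 1 : ℝ))) atTop (𝓝 0) := by
        rw [show (0 : ℝ≥0∞) = ENNReal.ofReal 0 by simp]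
        exact ENNReal.tendsto_ofReal tendsto_one_div_add_atTop_nhds_zero_nat
      have h2 : Tendsto (fun n : ℕ => (D * 3) * ENNReal.ofReal (1 / (n + 1 : ℝ)))
          atTop (𝓝 ((D * 3) * 0)) :=
        ENNReal.Tendsto.const_mul h1 (Or.inr (ENNReal.mul_ne_top hDne (by norm_num)))
      simpa using h2
    refine ge_of_tendsto' htend fun n => ?_
    exact H (1 / (n + 1 : ℝ)) (by positivity) (by
      rw [div_le_one (by positivity)]; linarith [Nat.cast_nonneg (α := ℝ) n])
  intro ε hε hε1
  have hσpos : ∀ n : ℕ, 0 < 1 / (n + 1 : ℝ) := fun n => by positivity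
  have hσ1 : ∀ n : ℕ, 1 / (n + 1 : ℝ) ≤ 1 := fun n => by
    rw [div_le_one (by positivity)]; linarith [Nat.cast_nonneg (α := ℝ) n]
  have hcovB : ∀ n : ℕ, ∃ u : ℕ → Set (Fin l → ℝ), B ⊆ (⋃ j, u j)
      ∧ (∀ j, EMetric.diam (u j) ≤ ENNReal.ofReal (1 / (n + 1 : ℝ)))
      ∧ ∑' j, EMetric.diam (u j) ^ ((l - m : ℕ) : ℝ) ≤ ENNReal.ofReal ε :=
    fun n => exists_small_cover htpos hB (ENNReal.ofReal_pos.mpr (hσpos n))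
      (ENNReal.ofReal_pos.mpr hε)
  choose u hu hud hus using hcovB
  set a : ℕ → ℕ → ℝ := fun n j =>
    max (EMetric.diam (u n j)).toReal (min (1 / (n + 1 : ℝ)) (ε * (1 / 2) ^ j)) with hadef
  have hapos : ∀ n j, 0 < a n j :=
    fun n j => lt_max_of_lt_right (lt_min (hσpos n) (by positivity))
  have hale : ∀ n j, a n j ≤ 1 / (n + 1 : ℝ) := fun n j =>
    max_le (ENNReal.toReal_le_of_le_ofReal (hσpos n).le (hud n j)) (min_le_left _ _)
  have hale1 : ∀ n j, a n j ≤ 1 := fun n j => (hale n j).trans (hσ1 n)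
  have hdiam_le_a : ∀ n j, EMetric.diam (u n j) ≤ ENNReal.ofReal (a n j) := by
    intro n j
    have hfin : EMetric.diam (u n j) ≠ ⊤ :=
      (lt_of_le_of_lt (hud n j) ENNReal.ofReal_lt_top).ne
    rw [← ENNReal.ofReal_toReal hfin]
    exact ENNReal.ofReal_le_ofReal (le_max_left _ _)
  have hKco : ENNReal.ofReal ((K : ℝ) + 1) = (K : ℝ≥0∞) + 1 := by
    rw [ENNReal.ofReal_add K.coe_nonneg zero_le_one, ENNReal.ofReal_coe_nnreal,
      ENNReal.ofReal_one]
  refine le_trans (MeasureTheory.Measure.hausdorffMeasure_le_liminf_tsum (l := atTop)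
      (ι := fun _ : ℕ => ℕ × (Fin m → ℤ)) (l : ℝ) {z | ∃ x : S, ∃ y ∈ B, z = y - f x}
      (fun n => ((K : ℝ≥0∞) + 1) * ENNReal.ofReal (1 / (n + 1 : ℝ))) ?_
      (fun n p => pieceSet S f (u n p.1) (a n p.1) p.2) ?_ ?_) ?_
  · -- tendsto 0
    have h1 : Tendsto (fun n : ℕ => ENNReal.ofReal (1 / (n + 1 : ℝ))) atTop (𝓝 0) := by
      rw [show (0 : ℝ≥0∞) = ENNReal.ofReal 0 by simp]
      exact ENNReal.tendsto_ofReal tendsto_one_div_add_atTop_nhds_zero_nat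
    have h2 : Tendsto (fun n : ℕ => ((K : ℝ≥0∞) + 1) * ENNReal.ofReal (1 / (n + 1 : ℝ)))
        atTop (𝓝 (((K : ℝ≥0∞) + 1) * 0)) :=
      ENNReal.Tendsto.const_mul h1 (Or.inr (by simp))
    simpa using h2
  · -- diameters
    refine Eventually.of_forall fun n => ?_
    rintro ⟨j, k⟩
    refine (pieceSet_diam hf (hapos n j) (hdiam_le_a n j) k).trans ?_
    rw [ENNReal.ofReal_mul (by positivity), hKco]
    exact mul_le_mul_right (ENNReal.ofReal_le_ofReal (hale n j)) _
  · -- covering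
    refine Eventually.of_forall fun n => ?_
    rintro z ⟨x, y, hyB, rfl⟩
    obtain ⟨j, hj⟩ : ∃ j, y ∈ u n j := mem_iUnion.mp (hu n hyB)
    obtain ⟨k, hk⟩ := pieceSet_cover (hapos n j) hj rfl
    exact mem_iUnion.mpr ⟨(j, k), hk⟩
  -- liminf bound
  have hper : ∀ n : ℕ,
      (∑' p : ℕ × (Fin m → ℤ), EMetric.diam (pieceSet S f (u n p.1) (a n p.1) p.2) ^ (l : ℝ))
        ≤ D * 3 * ENNReal.ofReal ε := by
    intro n
    rw [ENNReal.tsum_prod']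
    have hinner : ∀ j, (∑' k : Fin m → ℤ,
        EMetric.diam (pieceSet S f (u n j) (a n j) k) ^ (l : ℝ))
          ≤ D * ENNReal.ofReal (a n j) ^ ((l - m : ℕ) : ℝ) := by
      intro j
      refine le_trans (pieceSet_sum hml K hR (hapos n j) (hale1 n j) hSb hf
        (hdiam_le_a n j)) ?_
      rw [hDdef, mul_assoc]
    have hsplit : ∀ j, ENNReal.ofReal (a n j) ^ ((l - m : ℕ) : ℝ)
        ≤ EMetric.diam (u n j) ^ ((l - m : ℕ) : ℝ)
          + ENNReal.ofReal (ε * (1 / 2) ^ j) ^ ((l - m : ℕ) : ℝ) := by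
      intro j
      rcases max_cases (EMetric.diam (u n j)).toReal
        (min (1 / (n + 1 : ℝ)) (ε * (1 / 2) ^ j)) with ⟨heq, _⟩ | ⟨heq, _⟩
      · have hfin : EMetric.diam (u n j) ≠ ⊤ :=
          (lt_of_le_of_lt (hud n j) ENNReal.ofReal_lt_top).ne
        rw [show a n j = (EMetric.diam (u n j)).toReal from heq, ENNReal.ofReal_toReal hfin]
        exact le_self_add
      · rw [show a n j = min (1 / (n + 1 : ℝ)) (ε * (1 / 2) ^ j) from heq]
        exact le_trans (ENNReal.rpow_le_rpow
          (ENNReal.ofReal_le_ofReal (min_le_right _ _)) htpos.le) le_add_self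
    have hgeo : (∑' j : ℕ, ENNReal.ofReal (ε * (1 / 2) ^ j) ^ ((l - m : ℕ) : ℝ))
        ≤ 2 * ENNReal.ofReal ε := by
      have hb1 : ∀ j : ℕ, ENNReal.ofReal (ε * (1 / 2) ^ j) ≤ 1 := by
        intro j
        refine ENNReal.ofReal_le_one.mpr ?_
        have h12 : ((1 : ℝ) / 2) ^ j ≤ 1 := pow_le_one₀ (by norm_num) (by norm_num)
        nlinarith
      have hhalf : ENNReal.ofReal (1 / 2 : ℝ) = 2⁻¹ := by
        rw [show (1 / 2 : ℝ) = (2 : ℝ)⁻¹ by norm_num,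
          ENNReal.ofReal_inv_of_pos (by norm_num), ENNReal.ofReal_ofNat]
      calc (∑' j : ℕ, ENNReal.ofReal (ε * (1 / 2) ^ j) ^ ((l - m : ℕ) : ℝ))
          ≤ ∑' j : ℕ, ENNReal.ofReal (ε * (1 / 2) ^ j) := by
            refine ENNReal.tsum_le_tsum fun j => ?_
            have h := ENNReal.rpow_le_rpow_of_exponent_ge (hb1 j) ht1
            rwa [ENNReal.rpow_one] at h
        _ = ∑' j : ℕ, ENNReal.ofReal ε * ENNReal.ofReal (1 / 2 : ℝ) ^ j := by
            refine tsum_congr fun j => ?_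
            rw [ENNReal.ofReal_mul hε.le, ENNReal.ofReal_pow (by norm_num)]
        _ = ENNReal.ofReal ε * (1 - ENNReal.ofReal (1 / 2 : ℝ))⁻¹ := by
            rw [ENNReal.tsum_mul_left, ENNReal.tsum_geometric]
        _ = 2 * ENNReal.ofReal ε := by
            rw [hhalf, ENNReal.one_sub_inv_two, inv_inv, mul_comm]
    calc (∑' j : ℕ, ∑' k : Fin m → ℤ,
        EMetric.diam (pieceSet S f (u n j) (a n j) k) ^ (l : ℝ))
        ≤ ∑' j : ℕ, D * ENNReal.ofReal (a n j) ^ ((l - m : ℕ) : ℝ) :=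
          ENNReal.tsum_le_tsum hinner
      _ = D * ∑' j : ℕ, ENNReal.ofReal (a n j) ^ ((l - m : ℕ) : ℝ) := ENNReal.tsum_mul_left
      _ ≤ D * (3 * ENNReal.ofReal ε) := by
          refine mul_le_mul_right ?_ _
          calc (∑' j : ℕ, ENNReal.ofReal (a n j) ^ ((l - m : ℕ) : ℝ))
              ≤ ∑' j : ℕ, (EMetric.diam (u n j) ^ ((l - m : ℕ) : ℝ)
                + ENNReal.ofReal (ε * (1 / 2) ^ j) ^ ((l - m : ℕ) : ℝ)) :=
                ENNReal.tsum_le_tsum hsplit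
            _ = (∑' j : ℕ, EMetric.diam (u n j) ^ ((l - m : ℕ) : ℝ))
                + ∑' j : ℕ, ENNReal.ofReal (ε * (1 / 2) ^ j) ^ ((l - m : ℕ) : ℝ) :=
                ENNReal.tsum_add
            _ ≤ ENNReal.ofReal ε + 2 * ENNReal.ofReal ε := add_le_add (hus n) hgeo
            _ = 3 * ENNReal.ofReal ε := by ring
      _ = D * 3 * ENNReal.ofReal ε := by ring
  calc liminf (fun n => ∑' p : ℕ × (Fin m → ℤ),
      EMetric.diam (pieceSet S f (u n p.1) (a n p.1) p.2) ^ (l : ℝ)) atTop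
      ≤ liminf (fun _ : ℕ => D * 3 * ENNReal.ofReal ε) atTop :=
        liminf_le_liminf (Eventually.of_forall hper)
    _ = D * 3 * ENNReal.ofReal ε := liminf_const _

/-- A subset `A` of a metric space is countably `m`-rectifiable iff it is the union of the
images of countably many Lipschitz maps, each defined on some subset of `ℝ^m`. -/
def CountablyRectifiable (m : ℕ) {X : Type*} [MetricSpace X] (A : Set X) : Prop :=
  ∃ (S : ℕ → Set (EuclideanSpace ℝ (Fin m))) (f : ∀ i, S i → X) (C : ℕ → NNReal),
    (∀ i, LipschitzWith (C i) (f i)) ∧ A = ⋃ i, Set.range (f i)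

/-- **The set of displacement vectors is Lebesgue-null.** If `A ⊆ ℝ^ℓ` is countably
`m`-rectifiable and `B ⊆ ℝ^ℓ` is `(ℓ-m)`-negligible, then
`{y − x : x ∈ A, y ∈ B}` has `ℓ`-dimensional Lebesgue (outer) measure zero. -/
theorem displacement_vectors_null (ℓ m : ℕ) (hm : m ≤ ℓ)
    (A B : Set (EuclideanSpace ℝ (Fin ℓ)))
    (hA : CountablyRectifiable m A)
    (hB : μH[((ℓ - m : ℕ) : ℝ)] B = 0) :
    volume (Set.image2 (fun x y => y - x) A B) = 0 := by
  rcases eq_or_lt_of_le hm with rfl | hml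
  · -- m = ℓ : B must be empty
    have hBe : B = ∅ := by
      by_contra h
      have h1 := MeasureTheory.Measure.one_le_hausdorffMeasure_zero_of_nonempty
        (nonempty_iff_ne_empty.mpr h)
      rw [show ((m - m : ℕ) : ℝ) = 0 by simp] at hB
      rw [hB] at h1
      exact absurd h1 (by norm_num)
    rw [hBe, image2_empty_right]
    simp
  obtain ⟨S, f, C, hfl, hAeq⟩ := hA
  have hAeq2 : A = ⋃ i, ⋃ R : ℕ,
      f i '' {x : S i | ‖(x : EuclideanSpace ℝ (Fin m))‖ ≤ (R : ℝ)} := by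
    rw [hAeq]
    refine iUnion_congr fun i => ?_
    ext z
    simp only [mem_range, mem_iUnion, mem_image, mem_setOf_eq]
    constructor
    · rintro ⟨x, rfl⟩
      obtain ⟨R, hR⟩ := exists_nat_ge ‖(x : EuclideanSpace ℝ (Fin m))‖
      exact ⟨R, x, hR, rfl⟩
    · rintro ⟨R, x, _, rfl⟩
      exact ⟨x, rfl⟩
  rw [hAeq2, image2_iUnion_left]
  refine measure_iUnion_null fun i => ?_
  rw [image2_iUnion_left]
  refine measure_iUnion_null fun R => ?_
  -- transport to the sup-metric pi space
  set em := WithLp.equiv 2 (Fin m → ℝ) with hem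
  set el := WithLp.equiv 2 (Fin ℓ → ℝ) with hel
  set Sp : Set (Fin m → ℝ) :=
    {x | em.symm x ∈ S i ∧ ‖em.symm x‖ ≤ (R : ℝ)} with hSp
  have hSb : ∀ x ∈ Sp, ∀ q, |x q| ≤ (R : ℝ) := by
    intro x hx q
    have h1 : |x q| ≤ ‖x‖ := by
      simpa [Real.norm_eq_abs] using norm_le_pi_norm x q
    have h2 : ‖x‖ ≤ ‖em.symm x‖ := by
      have h3 := (PiLp.lipschitzWith_ofLp 2 (fun _ : Fin m => ℝ)).dist_le_mul
        (em.symm x) 0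
      change dist x 0 ≤ _ at h3
      simpa [dist_zero_right] using h3
    exact h1.trans (h2.trans hx.2)
  obtain ⟨Kc, hsymml⟩ : ∃ Kc : ℝ≥0, LipschitzWith Kc (em.symm) :=
    ⟨_, (PiLp.antilipschitzWith_ofLp 2 _).to_rightInverse fun x => em.apply_symm_apply x⟩
  set g : Sp → (Fin ℓ → ℝ) := fun z => el (f i ⟨em.symm z.val, z.prop.1⟩) with hg
  have hgl : LipschitzWith (C i * Kc) g := by
    intro z z'
    calc edist (g z) (g z')
        ≤ edist (f i ⟨em.symm z.val, z.prop.1⟩) (f i ⟨em.symm z'.val, z'.prop.1⟩) := by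
          have h5 := (PiLp.lipschitzWith_ofLp 2 (fun _ : Fin ℓ => ℝ))
            (f i ⟨em.symm z.val, z.prop.1⟩) (f i ⟨em.symm z'.val, z'.prop.1⟩)
          change edist (g z) (g z') ≤ _ at h5
          simpa using h5
      _ ≤ C i * edist (⟨em.symm z.val, z.prop.1⟩ : S i) ⟨em.symm z'.val, z'.prop.1⟩ :=
          hfl i _ _
      _ = C i * edist (em.symm z.val) (em.symm z'.val) := by rw [Subtype.edist_eq]
      _ ≤ C i * (Kc * edist z.val z'.val) := mul_le_mul_right (hsymml _ _) _
      _ = (C i * Kc : ℝ≥0) * edist z z' := by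
          rw [Subtype.edist_eq]; push_cast; ring
  set Bp : Set (Fin ℓ → ℝ) := el '' B with hBpdef
  have hBp : μH[((ℓ - m : ℕ) : ℝ)] Bp = 0 := by
    refine le_antisymm ?_ (zero_le)
    have h4 := (PiLp.lipschitzWith_ofLp 2 (fun _ : Fin ℓ => ℝ)).hausdorffMeasure_image_le
      (show (0 : ℝ) ≤ ((ℓ - m : ℕ) : ℝ) by positivity) B
    change μH[((ℓ - m : ℕ) : ℝ)] Bp ≤ _ at h4
    simpa [hB] using h4
  have hcore := core_null hml (C i * Kc) (Nat.cast_nonneg R) Sp hSb g hgl Bp hBp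
  have hTset : {z | ∃ x : Sp, ∃ y ∈ Bp, z = y - g x}
      = el '' (Set.image2 (fun x y => y - x)
          (f i '' {x : S i | ‖(x : EuclideanSpace ℝ (Fin m))‖ ≤ (R : ℝ)}) B) := by
    ext z
    simp only [mem_setOf_eq, mem_image, Set.mem_image2]
    constructor
    · rintro ⟨⟨xv, hx1, hx2⟩, y, ⟨yb, hyb, rfl⟩, rfl⟩
      refine ⟨yb - f i ⟨em.symm xv, hx1⟩,
        ⟨f i ⟨em.symm xv, hx1⟩, ⟨⟨em.symm xv, hx1⟩, hx2, rfl⟩, yb, hyb, rfl⟩, ?_⟩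
      rfl
    · rintro ⟨w, ⟨aa, ⟨x0, hx0, rfl⟩, yb, hyb, rfl⟩, rfl⟩
      have hmem : em x0.val ∈ Sp := by
        rw [hSp]
        constructor
        · rw [em.symm_apply_apply]; exact x0.2
        · rw [em.symm_apply_apply]; exact hx0
      refine ⟨⟨em x0.val, hmem⟩, el yb, ⟨yb, hyb, rfl⟩, ?_⟩
      have hgeq : g ⟨em x0.val, hmem⟩ = el (f i x0) := by
        rw [hg]
        congr 2
      rw [hgeq]; rfl
  have hvol_p : volume {z | ∃ x : Sp, ∃ y ∈ Bp, z = y - g x} = 0 := by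
    have hveq : (volume : Measure (Fin ℓ → ℝ)) = μH[(ℓ : ℝ)] := by
      rw [← MeasureTheory.hausdorffMeasure_pi_real (ι := Fin ℓ)]
      norm_num
    rw [hveq]
    exact hcore
  rw [hTset] at hvol_p
  obtain ⟨W, hsub, hWm, hW0⟩ := exists_measurable_superset_of_null hvol_p
  have hpre : volume ((MeasurableEquiv.toLp 2 (Fin ℓ → ℝ)).symm ⁻¹' W) = 0 := by
    rw [(EuclideanSpace.volume_preserving_symm_measurableEquiv_toLp (Fin ℓ)).measure_preimage
      hWm.nullMeasurableSet]
    exact hW0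
  refine measure_mono_null ?_ hpre
  intro w hw
  have hmem : el w ∈ W := hsub ⟨w, hw, rfl⟩
  exact hmem
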